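/- Let q be a K-quasi-metric on a set S with 1 ≤ K ≤ 2 replaced by arbitrary K ≥ 1. Then there exists α > 0 and a metric d on S such that (1/C)·q(x,y)^α ≤ d(x,y) ≤ C·q(x,y)^α for all x,y ∈ S and some constant C ≥ 1; i.e., every quasi-metric space is snowflake-equivalent to a metric space. -/

import Mathlib

open Finset in
/-- Bourbaki-style chain lemma: if `ρ` is symmetric-ish nonnegative with the
"triple" quasi-ultrametric inequality, then any chain sum bounds `ρ` of endpoints
up to a factor 2. -/
lemma frink_chain {S : Type*} (ρ : S → S → ℝ)
    (h0 : ∀ x y, 0 ≤ ρ x y)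
    (heq : ∀ x y, ρ x y = 0 → x = y)
    (hrefl : ∀ x, ρ x x = 0)
    (h3 : ∀ a b c d, ρ a d ≤ 2 * max (ρ a b) (max (ρ b c) (ρ c d))) :
    ∀ n (f : ℕ → S), ρ (f 0) (f n) ≤ 2 * ∑ i ∈ range n, ρ (f i) (f (i + 1)) := by
  intro n
  induction n using Nat.strong_induction_on with
  | _ n IH =>
  intro f
  set T := ∑ i ∈ range n, ρ (f i) (f (i + 1)) with hT
  have hTnonneg : 0 ≤ T := Finset.sum_nonneg fun i _ => h0 _ _
  rcases eq_or_lt_of_le hTnonneg with hT0 | hTpos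
  · -- all edges vanish, so all points coincide
    have hterm : ∀ i ∈ range n, ρ (f i) (f (i + 1)) = 0 := by
      intro i hi
      exact (Finset.sum_eq_zero_iff_of_nonneg (fun i _ => h0 _ _)).mp hT0.symm i hi
    have hchain : ∀ i, i ≤ n → f 0 = f i := by
      intro i
      induction i with
      | zero => intro _; rfl
      | succ k ihk =>
        intro hk
        have hk' : k ≤ n := by omega
        have hkr : k ∈ range n := Finset.mem_range.mpr (by omega)
        have := heq _ _ (hterm k hkr)
        rw [ihk hk', this]
    have : f 0 = f n := hchain n le_rfl
    rw [this, hrefl]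
    linarith
  · -- T > 0; pick the split point
    classical
    set P : ℕ → Prop := fun m => ∑ i ∈ range m, ρ (f i) (f (i + 1)) ≤ T / 2 with hP
    have hP0 : P 0 := by simp [hP]; linarith
    set m := Nat.findGreatest P n with hm
    have hPm : P m := Nat.findGreatest_spec (Nat.zero_le n) hP0
    have hmn : m ≤ n := Nat.findGreatest_le n
    have hmlt : m < n := by
      rcases lt_or_eq_of_le hmn with h | h
      · exact h
      · exfalso
        have : P n := h ▸ hPm
        rw [hP] at this
        simp only [← hT] at this
        linarith
    have hnotP : ¬ P (m + 1) := by
      exact Nat.findGreatest_is_greatest (n := n) (k := m + 1) (by omega) (by omega)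
    have hsum1 : T / 2 < ∑ i ∈ range (m + 1), ρ (f i) (f (i + 1)) := by
      rw [hP] at hnotP; linarith [not_le.mp hnotP]
    -- prefix bound
    have hA : ρ (f 0) (f m) ≤ T := by
      have := IH m hmlt f
      have hle : ∑ i ∈ range m, ρ (f i) (f (i + 1)) ≤ T / 2 := hPm
      linarith
    -- middle edge bound
    have hB : ρ (f m) (f (m + 1)) ≤ T := by
      have := Finset.single_le_sum (f := fun i => ρ (f i) (f (i + 1)))
        (fun i _ => h0 _ _) (Finset.mem_range.mpr hmlt)
      linarith
    -- suffix bound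
    have hsplit : T = (∑ i ∈ range (m + 1), ρ (f i) (f (i + 1)))
        + ∑ i ∈ range (n - (m + 1)), ρ (f (m + 1 + i)) (f (m + 1 + i + 1)) := by
      rw [hT]
      have hn : n = (m + 1) + (n - (m + 1)) := by omega
      rw [hn, Finset.sum_range_add]
      simp
    have hC : ρ (f (m + 1)) (f n) ≤ T := by
      have := IH (n - (m + 1)) (by omega) (fun i => f (m + 1 + i))
      beta_reduce at this
      have hend : m + 1 + (n - (m + 1)) = n := by omega
      rw [Nat.add_zero, hend] at this
      have hsufle : ∑ i ∈ range (n - (m + 1)), ρ (f (m + 1 + i)) (f (m + 1 + i + 1)) ≤ T / 2 := by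
        linarith
      calc ρ (f (m + 1)) (f n)
          ≤ 2 * ∑ i ∈ range (n - (m + 1)), ρ (f (m + 1 + i)) (f (m + 1 + i + 1)) := this
        _ ≤ T := by linarith
    calc ρ (f 0) (f n)
        ≤ 2 * max (ρ (f 0) (f m)) (max (ρ (f m) (f (m + 1))) (ρ (f (m + 1)) (f n))) :=
          h3 _ _ _ _
      _ ≤ 2 * T := by
          have : max (ρ (f 0) (f m)) (max (ρ (f m) (f (m + 1))) (ρ (f (m + 1)) (f n))) ≤ T :=
            max_le hA (max_le hB hC)
          linarith

/-- Every `K`-quasi-metric space (arbitrary `K ≥ 1`) is snowflake equivalent to a metric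
space: there are `α > 0`, `C ≥ 1` and a metric `d` on `S` with
`(1/C)·q(x,y)^α ≤ d(x,y) ≤ C·q(x,y)^α` for all `x, y`. -/
theorem stmt1 {S : Type*} (q : S → S → ℝ) (K : ℝ) (hK : 1 ≤ K)
    (hq0 : ∀ x y, 0 ≤ q x y)
    (hqeq : ∀ x y, q x y = 0 ↔ x = y)
    (hqsymm : ∀ x y, q x y = q y x)
    (hqtri : ∀ x y z, q x y ≤ K * max (q x z) (q z y)) :
    ∃ (α C : ℝ) (d : S → S → ℝ), 0 < α ∧ 1 ≤ C ∧
      (∀ x y, 0 ≤ d x y) ∧ (∀ x y, d x y = 0 ↔ x = y) ∧ (∀ x y, d x y = d y x) ∧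
      (∀ x y z, d x z ≤ d x y + d y z) ∧
      ∀ x y, q x y ^ α / C ≤ d x y ∧ d x y ≤ C * q x y ^ α := by
  classical
  -- choose the snowflake exponent
  set M : ℝ := max K 2 with hM
  have hM2 : (2 : ℝ) ≤ M := le_max_right _ _
  have hM1 : (1 : ℝ) < M := by linarith
  have hMpos : (0 : ℝ) < M := by linarith
  have hlogM : 0 < Real.log M := Real.log_pos hM1
  set α : ℝ := Real.log 2 / (2 * Real.log M) with hα
  have hαpos : 0 < α := by
    apply div_pos (Real.log_pos (by norm_num))
    linarith
  set β : ℝ := K ^ α with hβ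
  have hβ1 : 1 ≤ β := Real.one_le_rpow hK hαpos.le
  have hβM : β ≤ M ^ α := Real.rpow_le_rpow (by linarith) (le_max_left _ _) hαpos.le
  have hMα : M ^ α * M ^ α = 2 := by
    rw [← Real.rpow_add hMpos]
    rw [hα]
    have : Real.log 2 / (2 * Real.log M) + Real.log 2 / (2 * Real.log M)
        = Real.log 2 / Real.log M := by
      field_simp; ring
    rw [this, Real.rpow_def_of_pos hMpos]
    rw [mul_div_assoc', mul_comm, mul_div_assoc, div_self (ne_of_gt hlogM), mul_one]
    exact Real.exp_log (by norm_num)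
  have hβ2 : β * β ≤ 2 := by
    calc β * β ≤ M ^ α * M ^ α := by
          apply mul_le_mul hβM hβM (by linarith) (by positivity)
      _ = 2 := hMα
  -- the snowflaked quasi-metric
  set ρ : S → S → ℝ := fun x y => q x y ^ α with hρ
  have hρ0 : ∀ x y, 0 ≤ ρ x y := fun x y => Real.rpow_nonneg (hq0 x y) α
  have hρrefl : ∀ x, ρ x x = 0 := by
    intro x
    simp only [hρ]
    rw [(hqeq x x).mpr rfl, Real.zero_rpow (ne_of_gt hαpos)]
  have hρeq : ∀ x y, ρ x y = 0 → x = y := by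
    intro x y h
    have := (Real.rpow_eq_zero (hq0 x y) (ne_of_gt hαpos)).mp h
    exact (hqeq x y).mp this
  have hρsymm : ∀ x y, ρ x y = ρ y x := by
    intro x y; simp only [hρ, hqsymm x y]
  have hρ2 : ∀ x y z, ρ x y ≤ β * max (ρ x z) (ρ z y) := by
    intro x y z
    have h1 : ρ x y ≤ (K * max (q x z) (q z y)) ^ α :=
      Real.rpow_le_rpow (hq0 x y) (hqtri x y z) hαpos.le
    have hmax0 : 0 ≤ max (q x z) (q z y) := le_max_of_le_left (hq0 x z)
    have h2 : (K * max (q x z) (q z y)) ^ α = β * (max (q x z) (q z y)) ^ α :=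
      Real.mul_rpow (by linarith) hmax0
    have h3 : (max (q x z) (q z y)) ^ α = max (ρ x z) (ρ z y) := by
      rcases le_total (q x z) (q z y) with h | h
      · rw [max_eq_right h, max_eq_right (Real.rpow_le_rpow (hq0 x z) h hαpos.le)]
      · rw [max_eq_left h, max_eq_left (Real.rpow_le_rpow (hq0 z y) h hαpos.le)]
    rw [h2, h3] at h1
    exact h1
  have hρ3 : ∀ a b c d, ρ a d ≤ 2 * max (ρ a b) (max (ρ b c) (ρ c d)) := by
    intro a b c d
    have hmax0 : 0 ≤ max (ρ a b) (max (ρ b c) (ρ c d)) := le_max_of_le_left (hρ0 a b)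
    calc ρ a d ≤ β * max (ρ a b) (ρ b d) := hρ2 a d b
      _ ≤ β * max (ρ a b) (β * max (ρ b c) (ρ c d)) := by
          apply mul_le_mul_of_nonneg_left _ (by linarith)
          exact max_le_max le_rfl (hρ2 b d c)
      _ ≤ β * (β * max (ρ a b) (max (ρ b c) (ρ c d))) := by
          apply mul_le_mul_of_nonneg_left _ (by linarith)
          apply max_le
          · calc ρ a b ≤ max (ρ a b) (max (ρ b c) (ρ c d)) := le_max_left _ _
              _ ≤ β * max (ρ a b) (max (ρ b c) (ρ c d)) := le_mul_of_one_le_left hmax0 hβ1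
          · apply mul_le_mul_of_nonneg_left _ (by linarith)
            exact le_max_right _ _
      _ = β * β * max (ρ a b) (max (ρ b c) (ρ c d)) := by ring
      _ ≤ 2 * max (ρ a b) (max (ρ b c) (ρ c d)) := mul_le_mul_of_nonneg_right hβ2 hmax0
  have key := frink_chain ρ hρ0 hρeq hρrefl hρ3
  -- the chain-sum metric
  set A : S → S → Set ℝ := fun x y =>
    {s | ∃ n, ∃ f : ℕ → S, f 0 = x ∧ f n = y ∧ s = ∑ i ∈ Finset.range n, ρ (f i) (f (i + 1))}
    with hA
  have hmem : ∀ x y, ρ x y ∈ A x y := by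
    intro x y
    refine ⟨1, fun i => if i = 0 then x else y, by simp, by simp, ?_⟩
    simp
  have hlb : ∀ x y s, s ∈ A x y → ρ x y / 2 ≤ s := by
    rintro x y s ⟨n, f, hf0, hfn, rfl⟩
    have := key n f
    rw [hf0, hfn] at this
    linarith
  have hne : ∀ x y, (A x y).Nonempty := fun x y => ⟨ρ x y, hmem x y⟩
  have hbdd : ∀ x y, BddBelow (A x y) := by
    intro x y
    exact ⟨ρ x y / 2, fun s hs => hlb x y s hs⟩
  set d : S → S → ℝ := fun x y => sInf (A x y) with hd
  have hdle : ∀ x y, d x y ≤ ρ x y := fun x y => csInf_le (hbdd x y) (hmem x y)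
  have hdge : ∀ x y, ρ x y / 2 ≤ d x y := fun x y =>
    le_csInf (hne x y) (fun s hs => hlb x y s hs)
  have hd0 : ∀ x y, 0 ≤ d x y := by
    intro x y
    have := hdge x y
    have := hρ0 x y
    linarith
  -- symmetry via chain reversal
  have hArev : ∀ x y, A x y ⊆ A y x := by
    rintro x y s ⟨n, f, hf0, hfn, rfl⟩
    have hsum : ∑ i ∈ Finset.range n, ρ (f i) (f (i + 1))
        = ∑ i ∈ Finset.range n, ρ (f (n - i)) (f (n - (i + 1))) := by
      calc ∑ i ∈ Finset.range n, ρ (f i) (f (i + 1))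
          = ∑ i ∈ Finset.range n,
              (fun j => ρ (f (n - j)) (f (n - (j + 1)))) (n - 1 - i) := by
            apply Finset.sum_congr rfl
            intro i hi
            have hi' : i < n := Finset.mem_range.mp hi
            show ρ (f i) (f (i + 1)) = ρ (f (n - (n - 1 - i))) (f (n - (n - 1 - i + 1)))
            rw [show n - (n - 1 - i) = i + 1 from by omega,
              show n - (n - 1 - i + 1) = i from by omega]
            exact hρsymm _ _
        _ = ∑ i ∈ Finset.range n, ρ (f (n - i)) (f (n - (i + 1))) :=
            Finset.sum_range_reflect (fun j => ρ (f (n - j)) (f (n - (j + 1)))) n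
    exact ⟨n, fun i => f (n - i), by simp [hfn], by simp [hf0], hsum⟩
  have hdsymm : ∀ x y, d x y = d y x := by
    intro x y
    have h : A x y = A y x := Set.Subset.antisymm (hArev x y) (hArev y x)
    show sInf (A x y) = sInf (A y x)
    rw [h]
  -- triangle inequality via chain concatenation
  have hcat : ∀ x y z s t, s ∈ A x y → t ∈ A y z → s + t ∈ A x z := by
    rintro x y z s t ⟨n, f, hf0, hfn, rfl⟩ ⟨m, g, hg0, hgm, rfl⟩
    set h : ℕ → S := fun i => if i ≤ n then f i else g (i - n) with hh
    have hhg : ∀ i, h (n + i) = g i := by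
      intro i
      simp only [hh]
      rcases Nat.eq_zero_or_pos i with rfl | hi
      · simp [hfn, hg0.symm]
      · rw [if_neg (by omega)]
        congr 1
        omega
    refine ⟨n + m, h, ?_, ?_, ?_⟩
    · simp [hh, hf0]
    · rw [hhg m, hgm]
    · rw [Finset.sum_range_add]
      congr 1
      · apply Finset.sum_congr rfl
        intro i hi
        have hi' : i < n := Finset.mem_range.mp hi
        simp only [hh]
        rw [if_pos (by omega), if_pos (by omega)]
      · apply Finset.sum_congr rfl
        intro i hi
        rw [show n + i + 1 = n + (i + 1) by ring, hhg i, hhg (i + 1)]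
  have hdtri : ∀ x y z, d x z ≤ d x y + d y z := by
    intro x y z
    have step1 : ∀ t ∈ A y z, d x z ≤ d x y + t := by
      intro t ht
      have : d x z - t ≤ d x y := by
        apply le_csInf (hne x y)
        intro s hs
        have h2 : d x z ≤ s + t := csInf_le (hbdd x z) (hcat x y z s t hs ht)
        linarith
      linarith
    have : d x z - d x y ≤ d y z := by
      apply le_csInf (hne y z)
      intro t ht
      have := step1 t ht
      linarith
    linarith
  -- assemble
  refine ⟨α, 2, d, hαpos, by norm_num, hd0, ?_, hdsymm, hdtri, ?_⟩
  · intro x y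
    constructor
    · intro h
      apply hρeq x y
      have := hdge x y
      have := hρ0 x y
      linarith [h ▸ hdge x y]
    · rintro rfl
      have h1 := hdle x x
      rw [hρrefl x] at h1
      exact le_antisymm h1 (hd0 x x)
  · intro x y
    constructor
    · have := hdge x y
      calc q x y ^ α / 2 = ρ x y / 2 := rfl
        _ ≤ d x y := this
    · calc d x y ≤ ρ x y := hdle x y
        _ ≤ 2 * q x y ^ α := by
          have := hρ0 x y
          simp only [hρ] at *
          linarith
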